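/- Fix c > 0 and let t = t(n) satisfy t/√n → c. Define q(x) = 1 for x = 0 and q(x) = (2/x²)·sinh(x²/2) for x > 0. Then S_{n,t}/√n → ∫_0^c q(x) dx, where S_{n,t} = Σ_{k=0}^{t} Q_{n,k} and Q_{n,k} = (n/((k+1)(k+2)))·[∏_{j=0}^{k+1}(1 + j/n) − ∏_{j=0}^{k+1}(1 − j/n)]. -/

import Mathlib

open Filter

/-- The exact finite-width RNN signal energy `Q_{n,k}` in product form. -/
noncomputable def Q (n k : ℕ) : ℝ :=
  ((n : ℝ) / ((k + 1) * (k + 2))) *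
    (∏ j ∈ Finset.range (k + 2), (1 + (j : ℝ) / n) -
     ∏ j ∈ Finset.range (k + 2), (1 - (j : ℝ) / n))

/-- The cumulative LRU signal energy `S_{n,t} = Σ_{k=0}^t Q_{n,k}`. -/
noncomputable def S (n t : ℕ) : ℝ := ∑ k ∈ Finset.range (t + 1), Q n k

/-- The continuous critical profile `q(x)`: `q(0) = 1` and `q(x) = (2/x²)·sinh(x²/2)`
for `x > 0`. -/
noncomputable def qProfile (x : ℝ) : ℝ :=
  if x = 0 then 1 else (2 / x ^ 2) * Real.sinh (x ^ 2 / 2)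

open Real

section Aux

/- ### Elementary exponential inequalities -/

lemma exp_mul_le_one' (y : ℝ) : exp y * (1 - y) ≤ 1 := by
  have h := Real.add_one_le_exp (-y)
  have h2 := Real.exp_pos y
  have h3 : exp y * exp (-y) = 1 := by rw [← Real.exp_add]; simp
  nlinarith

lemma lb_plus (x : ℝ) (hx : 0 ≤ x) : exp (x - x^2) ≤ 1 + x := by
  have h := exp_mul_le_one' (x - x^2)
  have h2 := Real.exp_pos (x - x^2)
  have hpos : (0:ℝ) < 1 - x + x^2 := by nlinarith
  have h1 : exp (x - x^2) ≤ 1/(1 - x + x^2) := by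
    rw [le_div_iff₀ hpos]; nlinarith
  have h3 : 1/(1 - x + x^2) ≤ 1 + x := by
    rw [div_le_iff₀ hpos]; nlinarith
  linarith

lemma lb_minus (x : ℝ) (hx : 0 ≤ x) (hx2 : x ≤ 1/2) : exp (-x - 2*x^2) ≤ 1 - x := by
  have h := exp_mul_le_one' (-x - 2*x^2)
  have h2 := Real.exp_pos (-x - 2*x^2)
  have hpos : (0:ℝ) < 1 + x + 2*x^2 := by nlinarith
  have h1 : exp (-x - 2*x^2) ≤ 1/(1 + x + 2*x^2) := by
    rw [le_div_iff₀ hpos]; nlinarith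
  have h3 : 1/(1 + x + 2*x^2) ≤ 1 - x := by
    rw [div_le_iff₀ hpos]; nlinarith
  linarith

lemma ub_plus (x : ℝ) : 1 + x ≤ exp x := by linarith [Real.add_one_le_exp x]
lemma ub_minus (x : ℝ) : 1 - x ≤ exp (-x) := by linarith [Real.add_one_le_exp (-x)]

/- ### Monotonicity of `sinh u / u` -/

lemma sinh_le_mul_cosh {u : ℝ} (hu : 0 ≤ u) : Real.sinh u ≤ u * Real.cosh u := by
  have hmono : MonotoneOn (fun v => v * Real.cosh v - Real.sinh v) (Set.Ici (0:ℝ)) := by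
    apply monotoneOn_of_deriv_nonneg (convex_Ici 0)
    · fun_prop
    · intro x hx
      exact ((hasDerivAt_id x).mul (Real.hasDerivAt_cosh x)).sub
        (Real.hasDerivAt_sinh x) |>.differentiableAt.differentiableWithinAt
    · intro x hx
      rw [interior_Ici, Set.mem_Ioi] at hx
      have hD : HasDerivAt (fun v => v * Real.cosh v - Real.sinh v)
          (1 * Real.cosh x + x * Real.sinh x - Real.cosh x) x :=
        ((hasDerivAt_id x).mul (Real.hasDerivAt_cosh x)).sub (Real.hasDerivAt_sinh x)
      rw [hD.deriv]
      have : 0 ≤ Real.sinh x := by rw [← Real.sinh_zero]; exact (Real.sinh_lt_sinh.2 hx).le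
      nlinarith
  have := hmono (Set.self_mem_Ici) (Set.mem_Ici.2 hu) hu
  simpa using this

lemma sinhRatio_mono : MonotoneOn (fun u => Real.sinh u / u) (Set.Ioi (0:ℝ)) := by
  apply monotoneOn_of_deriv_nonneg (convex_Ioi 0)
  · apply ContinuousOn.div Real.continuous_sinh.continuousOn continuousOn_id
    intro x hx; exact ne_of_gt hx
  · intro x hx
    rw [interior_Ioi] at hx
    exact ((Real.hasDerivAt_sinh x).div (hasDerivAt_id x)
      (ne_of_gt hx)).differentiableAt.differentiableWithinAt
  · intro x hx
    rw [interior_Ioi, Set.mem_Ioi] at hx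
    have hD : HasDerivAt (fun u => Real.sinh u / u)
        ((Real.cosh x * x - Real.sinh x * 1) / x ^ 2) x :=
      (Real.hasDerivAt_sinh x).div (hasDerivAt_id x) (ne_of_gt hx)
    rw [hD.deriv]
    have := sinh_le_mul_cosh hx.le
    apply div_nonneg _ (by positivity)
    nlinarith

lemma one_le_sinhRatio {u : ℝ} (hu : 0 < u) : 1 ≤ Real.sinh u / u :=
  (one_le_div hu).2 (Real.self_lt_sinh_iff.2 hu).le

lemma qProfile_eq {x : ℝ} (hx : 0 < x) : qProfile x = Real.sinh (x^2/2) / (x^2/2) := by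
  rw [qProfile, if_neg (ne_of_gt hx)]
  field_simp

lemma qProfile_mono : MonotoneOn qProfile (Set.Ici (0:ℝ)) := by
  intro a ha b hb hab
  rcases eq_or_lt_of_le (Set.mem_Ici.1 ha) with ha0 | ha0
  · rcases eq_or_lt_of_le (Set.mem_Ici.1 hb) with hb0 | hb0
    · rw [← ha0, ← hb0]
    · rw [← ha0, qProfile, if_pos rfl, qProfile_eq hb0]
      exact one_le_sinhRatio (by positivity)
  · have hb0 : 0 < b := lt_of_lt_of_le ha0 hab
    rw [qProfile_eq ha0, qProfile_eq hb0]
    exact sinhRatio_mono (by simp; positivity) (by simp; positivity) (by nlinarith)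

lemma one_le_qProfile {x : ℝ} (hx : 0 ≤ x) : 1 ≤ qProfile x := by
  rcases eq_or_lt_of_le hx with h | h
  · rw [← h, qProfile, if_pos rfl]
  · rw [qProfile_eq h]; exact one_le_sinhRatio (by positivity)

lemma q_le_ratio {x u : ℝ} (hx : 0 ≤ x) (hu0 : 0 < u) (h : x^2/2 ≤ u) :
    qProfile x ≤ Real.sinh u / u := by
  rcases eq_or_lt_of_le hx with h0 | h0
  · rw [← h0, qProfile, if_pos rfl]; exact one_le_sinhRatio hu0
  · rw [qProfile_eq h0]
    exact sinhRatio_mono (by simp; positivity) (Set.mem_Ioi.2 hu0) h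

lemma ratio_le_q {x u : ℝ} (hx : 0 < x) (hu0 : 0 < u) (h : u ≤ x^2/2) :
    Real.sinh u / u ≤ qProfile x := by
  rw [qProfile_eq hx]
  exact sinhRatio_mono (Set.mem_Ioi.2 hu0) (by simp; positivity) h

/- ### The per-term estimate -/

noncomputable def uu (n k : ℕ) : ℝ := ((k:ℝ)+1)*((k:ℝ)+2)/(2*(n:ℝ))

lemma uu_pos {n k : ℕ} (hn : 1 ≤ n) : 0 < uu n k := by
  have : (0:ℝ) < n := by exact_mod_cast hn
  unfold uu; positivity

lemma sum_div_eq (n k : ℕ) (hn : 1 ≤ n) :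
    ∑ j ∈ Finset.range (k + 2), (j:ℝ)/n = uu n k := by
  have hn0 : (n:ℝ) ≠ 0 := by positivity
  have h2 : (∑ j ∈ Finset.range (k + 2), (j:ℝ)) * 2 = ((k:ℝ)+2) * ((k:ℝ)+1) := by
    have h := Finset.sum_range_id_mul_two (k+2)
    have h1 : (k+2) - 1 = k+1 := rfl
    rw [h1] at h
    have h3 := congrArg (fun m : ℕ => (m:ℝ)) h
    push_cast at h3
    exact h3
  rw [← Finset.sum_div]
  rw [uu, div_eq_div_iff hn0 (by positivity)]; linear_combination (n:ℝ) * h2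

lemma E_bound (n k : ℕ) (hn : 1 ≤ n) :
    ∑ j ∈ Finset.range (k + 2), ((j:ℝ)/n)^2 ≤ uu n k * (2*((k:ℝ)+1)/n) := by
  have hn0 : (0:ℝ) < n := by exact_mod_cast hn
  have h := Finset.sum_le_card_nsmul (Finset.range (k+2)) (fun j => ((j:ℝ)/n)^2)
    ((((k:ℝ)+1)/n)^2) ?_
  · simp only [Finset.card_range, nsmul_eq_mul] at h
    refine h.trans (le_of_eq ?_)
    rw [uu]; push_cast; field_simp
  · intro j hj
    rw [Finset.mem_range] at hj
    have hjk : (j:ℝ) ≤ (k:ℝ)+1 := by exact_mod_cast Nat.lt_succ_iff.1 hj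
    have hd : (j:ℝ)/n ≤ ((k:ℝ)+1)/n := by gcongr
    have h0 : (0:ℝ) ≤ (j:ℝ)/n := by positivity
    nlinarith

lemma Q_close (n k : ℕ) (hn : 1 ≤ n) (hk : ((k:ℝ)+1)/n ≤ 1/2) :
    |Q n k - Real.sinh (uu n k) / uu n k| ≤ exp (uu n k) * (2*((k:ℝ)+1)/n) := by
  have hn0 : (0:ℝ) < n := by exact_mod_cast hn
  obtain ⟨U, hUdef⟩ : ∃ U, uu n k = U := ⟨_, rfl⟩
  have hU : 0 < U := hUdef ▸ uu_pos hn
  obtain ⟨E, hEdef⟩ : ∃ E, ∑ j ∈ Finset.range (k + 2), ((j:ℝ)/n)^2 = E := ⟨_, rfl⟩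
  have hE : 0 ≤ E := hEdef ▸ Finset.sum_nonneg (fun j _ => sq_nonneg _)
  obtain ⟨A, hA⟩ : ∃ A, ∏ j ∈ Finset.range (k + 2), (1 + (j : ℝ) / n) = A := ⟨_, rfl⟩
  obtain ⟨B, hB⟩ : ∃ B, ∏ j ∈ Finset.range (k + 2), (1 - (j : ℝ) / n) = B := ⟨_, rfl⟩
  have hjle : ∀ j ∈ Finset.range (k+2), (j:ℝ)/n ≤ 1/2 := by
    intro j hj
    rw [Finset.mem_range] at hj
    have h1 : (j:ℝ) ≤ (k:ℝ)+1 := by exact_mod_cast Nat.lt_succ_iff.1 hj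
    calc (j:ℝ)/n ≤ ((k:ℝ)+1)/n := by gcongr
    _ ≤ 1/2 := hk
  have hjn : ∀ j ∈ Finset.range (k+2), (0:ℝ) ≤ (j:ℝ)/n := fun j _ => by positivity
  have h1 : A ≤ exp U := by
    rw [← hA, ← hUdef, ← sum_div_eq n k hn, Real.exp_sum]
    exact Finset.prod_le_prod (fun j hj => by nlinarith [hjn j hj]) (fun j hj => ub_plus _)
  have h2 : exp (U - E) ≤ A := by
    rw [← hA, ← hUdef, ← hEdef, ← sum_div_eq n k hn, ← Finset.sum_sub_distrib, Real.exp_sum]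
    exact Finset.prod_le_prod (fun j hj => (Real.exp_pos _).le)
      (fun j hj => lb_plus _ (hjn j hj))
  have h3 : B ≤ exp (-U) := by
    rw [← hB, ← hUdef, ← sum_div_eq n k hn, ← Finset.sum_neg_distrib, Real.exp_sum]
    exact Finset.prod_le_prod (fun j hj => by nlinarith [hjle j hj]) (fun j hj => ub_minus _)
  have h4 : exp (-U - 2*E) ≤ B := by
    have heq : -U - 2*E = ∑ j ∈ Finset.range (k+2), (-((j:ℝ)/n) - 2*((j:ℝ)/n)^2) := by
      rw [Finset.sum_sub_distrib, Finset.sum_neg_distrib, ← Finset.mul_sum,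
        sum_div_eq n k hn, hUdef, hEdef]
    rw [← hB, heq, Real.exp_sum]
    exact Finset.prod_le_prod (fun j hj => (Real.exp_pos _).le)
      (fun j hj => lb_minus _ (hjn j hj) (hjle j hj))
  have hs : Real.sinh U = (exp U - exp (-U))/2 := Real.sinh_eq U
  have he1 : 1 - exp (-(2*E)) ≤ 2*E := by nlinarith [ub_minus (2*E)]
  have he2 : 1 - exp (-E) ≤ E := by nlinarith [ub_minus E]
  have hu1 : (1:ℝ) ≤ exp U := by
    rw [← Real.exp_zero]; exact Real.exp_le_exp.2 hU.le
  have hu2 : exp (-U) ≤ 1 := by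
    rw [← Real.exp_zero]; exact Real.exp_le_exp.2 (by linarith)
  have key : |(A - B) - 2 * Real.sinh U| ≤ exp U * (2*E) := by
    rw [abs_le]
    have e1 : exp (U - E) = exp U * exp (-E) := by rw [← Real.exp_add]; ring_nf
    have e2 : exp (-U - 2*E) = exp (-U) * exp (-(2*E)) := by rw [← Real.exp_add]; ring_nf
    rw [e1] at h2; rw [e2] at h4
    constructor
    · nlinarith [mul_le_mul_of_nonneg_left he2 (Real.exp_pos U).le, Real.exp_pos (-U)]
    · nlinarith [mul_le_mul_of_nonneg_left he1 (Real.exp_pos (-U)).le, Real.exp_pos (-U)]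
  have hQeq : Q n k = (A - B)/(2*U) := by
    rw [Q, hA, hB, ← hUdef, uu]
    have hk1 : (0:ℝ) < ((k:ℝ)+1)*((k:ℝ)+2) := by positivity
    field_simp
  have hdiff : Q n k - Real.sinh U / U = ((A - B) - 2 * Real.sinh U)/(2*U) := by
    rw [hQeq]; field_simp
  rw [hUdef, hdiff, abs_div, abs_of_pos (by linarith : (0:ℝ) < 2*U),
    div_le_iff₀ (by linarith : (0:ℝ) < 2*U)]
  have hEU := E_bound n k hn
  rw [hEdef, hUdef] at hEU
  calc |(A - B) - 2 * Real.sinh U| ≤ exp U * (2*E) := key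
    _ ≤ exp U * (2*(U * (2*((k:ℝ)+1)/n))) := by
        apply mul_le_mul_of_nonneg_left _ (Real.exp_pos U).le
        linarith
    _ = exp U * (2*((k:ℝ)+1)/n) * (2*U) := by ring

/- ### Integrability and Riemann-sum bounds -/

lemma q_intervalIntegrable {x y : ℝ} (hx : 0 ≤ x) (hy : 0 ≤ y) :
    IntervalIntegrable qProfile MeasureTheory.volume x y := by
  apply MonotoneOn.intervalIntegrable
  apply qProfile_mono.mono
  exact Set.uIcc_subset_Icc (Set.mem_Icc.2 ⟨hx, le_max_left x y⟩)
    (Set.mem_Icc.2 ⟨hy, le_max_right x y⟩) |>.trans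
    (Set.Icc_subset_Ici_self)

lemma riemann_lower (T : ℕ) (r : ℝ) (hr : 0 < r) :
    ∫ x in (0:ℝ)..((T:ℝ)/r), qProfile x
      ≤ (∑ k ∈ Finset.range (T+1), qProfile ((k:ℝ)/r)) / r := by
  have hint : ∀ k : ℕ, ∀ m : ℕ,
      IntervalIntegrable qProfile MeasureTheory.volume ((k:ℝ)/r) ((m:ℝ)/r) :=
    fun k m => q_intervalIntegrable (by positivity) (by positivity)
  have key : ∫ x in (0:ℝ)..((T:ℝ)/r), qProfile x
      = ∑ k ∈ Finset.range T, ∫ x in ((k:ℝ)/r)..(((k:ℝ)+1)/r), qProfile x := by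
    have h := intervalIntegral.sum_integral_adjacent_intervals
      (a := fun k : ℕ => (k:ℝ)/r) (n := T) (f := qProfile)
      (μ := MeasureTheory.volume) (fun k _ => by
        have := hint k (k+1); push_cast at this ⊢; exact this)
    push_cast at h
    simp only [zero_div] at h
    exact h.symm
  rw [key]
  have step : ∀ k : ℕ, ∫ x in ((k:ℝ)/r)..(((k:ℝ)+1)/r), qProfile x
      ≤ qProfile (((k:ℝ)+1)/r) / r := by
    intro k
    have hab : (k:ℝ)/r ≤ ((k:ℝ)+1)/r := by gcongr; linarith
    have h := intervalIntegral.integral_mono_on hab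
      (by have := hint k (k+1); push_cast at this; exact this)
      (intervalIntegrable_const (c := qProfile (((k:ℝ)+1)/r)))
      (fun x hx => qProfile_mono
        (Set.mem_Ici.2 (le_trans (by positivity) hx.1))
        (Set.mem_Ici.2 (by positivity)) hx.2)
    rw [intervalIntegral.integral_const, smul_eq_mul] at h
    refine h.trans (le_of_eq ?_)
    field_simp
    ring
  calc ∑ k ∈ Finset.range T, ∫ x in ((k:ℝ)/r)..(((k:ℝ)+1)/r), qProfile x
      ≤ ∑ k ∈ Finset.range T, qProfile (((k:ℝ)+1)/r) / r :=
        Finset.sum_le_sum (fun k _ => step k)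
    _ ≤ (∑ k ∈ Finset.range (T+1), qProfile ((k:ℝ)/r)) / r := by
        rw [Finset.sum_range_succ' (fun k => qProfile ((k:ℝ)/r)) T, add_div, Finset.sum_div]
        have h0 : 0 ≤ qProfile (((0:ℕ):ℝ)/r) / r := by
          apply div_nonneg _ hr.le
          have : ((0:ℕ):ℝ)/r = 0 := by simp
          rw [this]
          exact le_trans zero_le_one (one_le_qProfile (le_refl (0:ℝ)))
        have hcong : ∀ k ∈ Finset.range T,
            qProfile (((k:ℝ)+1)/r) / r = qProfile (((k+1:ℕ):ℝ)/r) / r := by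
          intro k _; push_cast; ring_nf
        rw [Finset.sum_congr rfl hcong]
        linarith
  
lemma riemann_upper (T : ℕ) (r : ℝ) (hr : 0 < r) :
    (∑ k ∈ Finset.range (T+1), qProfile (((k:ℝ)+2)/r)) / r
      ≤ ∫ x in (0:ℝ)..(((T:ℝ)+3)/r), qProfile x := by
  have hint : ∀ x y : ℝ, 0 ≤ x → 0 ≤ y →
      IntervalIntegrable qProfile MeasureTheory.volume x y :=
    fun x y hx hy => q_intervalIntegrable hx hy
  have key : ∑ k ∈ Finset.range (T+1), ∫ x in (((k:ℝ)+2)/r)..(((k:ℝ)+3)/r), qProfile x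
      = ∫ x in ((2:ℝ)/r)..(((T:ℝ)+3)/r), qProfile x := by
    have h := intervalIntegral.sum_integral_adjacent_intervals
      (a := fun k : ℕ => ((k:ℝ)+2)/r) (n := T+1) (f := qProfile)
      (μ := MeasureTheory.volume) (fun k _ =>
        hint _ _ (by positivity) (by positivity))
    push_cast at h
    simp only [show ∀ y:ℝ, y+1+2 = y+3 from fun y => by ring] at h
    norm_num at h
    exact h
  have step : ∀ k : ℕ, qProfile (((k:ℝ)+2)/r) / r
      ≤ ∫ x in (((k:ℝ)+2)/r)..(((k:ℝ)+3)/r), qProfile x := by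
    intro k
    have hab : ((k:ℝ)+2)/r ≤ ((k:ℝ)+3)/r := by gcongr; linarith
    have h := intervalIntegral.integral_mono_on hab
      (intervalIntegrable_const (c := qProfile (((k:ℝ)+2)/r)))
      (hint _ _ (by positivity) (by positivity))
      (fun x hx => qProfile_mono
        (Set.mem_Ici.2 (by positivity))
        (Set.mem_Ici.2 (le_trans (by positivity) hx.1)) hx.1)
    rw [intervalIntegral.integral_const, smul_eq_mul] at h
    refine le_trans (le_of_eq ?_) h
    field_simp
    ring
  have h2 : ∫ x in ((2:ℝ)/r)..(((T:ℝ)+3)/r), qProfile x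
      ≤ ∫ x in (0:ℝ)..(((T:ℝ)+3)/r), qProfile x := by
    have hadd := intervalIntegral.integral_add_adjacent_intervals
      (a := (0:ℝ)) (b := (2:ℝ)/r) (c := ((T:ℝ)+3)/r) (f := qProfile)
      (μ := MeasureTheory.volume)
      (hint _ _ le_rfl (by positivity)) (hint _ _ (by positivity) (by positivity))
    have hpos : 0 ≤ ∫ x in (0:ℝ)..((2:ℝ)/r), qProfile x := by
      apply intervalIntegral.integral_nonneg (by positivity)
      intro x hx
      exact le_trans zero_le_one (one_le_qProfile hx.1)
    linarith
  calc (∑ k ∈ Finset.range (T+1), qProfile (((k:ℝ)+2)/r)) / r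
      = ∑ k ∈ Finset.range (T+1), qProfile (((k:ℝ)+2)/r) / r := by rw [Finset.sum_div]
    _ ≤ ∑ k ∈ Finset.range (T+1), ∫ x in (((k:ℝ)+2)/r)..(((k:ℝ)+3)/r), qProfile x :=
        Finset.sum_le_sum (fun k _ => step k)
    _ = ∫ x in ((2:ℝ)/r)..(((T:ℝ)+3)/r), qProfile x := key
    _ ≤ ∫ x in (0:ℝ)..(((T:ℝ)+3)/r), qProfile x := h2

/- ### Convergence of the primitive -/

lemma int_tendsto (c : ℝ) (hc : 0 < c) (a : ℕ → ℝ) (ha0 : ∀ n, 0 ≤ a n)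
    (ha : Tendsto a atTop (nhds c)) :
    Tendsto (fun n => ∫ x in (0:ℝ)..(a n), qProfile x) atTop
      (nhds (∫ x in (0:ℝ)..c, qProfile x)) := by
  have hM1 : (1:ℝ) ≤ qProfile (c+1) := one_le_qProfile (by linarith)
  have hdiff : Tendsto (fun n => (∫ x in (0:ℝ)..(a n), qProfile x)
      - ∫ x in (0:ℝ)..c, qProfile x) atTop (nhds 0) := by
    apply squeeze_zero_norm' (a := fun n => qProfile (c+1) * |a n - c|)
    · have hev : ∀ᶠ n in atTop, a n ≤ c + 1 := by
        exact ha.eventually_le_const (show c < c+1 by linarith)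
      filter_upwards [hev] with n hle
      have hadd := intervalIntegral.integral_add_adjacent_intervals
        (a := (0:ℝ)) (b := c) (c := a n) (f := qProfile) (μ := MeasureTheory.volume)
        (q_intervalIntegrable le_rfl hc.le) (q_intervalIntegrable hc.le (ha0 n))
      have heq : (∫ x in (0:ℝ)..(a n), qProfile x) - ∫ x in (0:ℝ)..c, qProfile x
          = ∫ x in c..(a n), qProfile x := by linarith
      rw [Real.norm_eq_abs, heq]
      have := intervalIntegral.norm_integral_le_of_norm_le_const
        (C := qProfile (c+1)) (f := qProfile) (a := c) (b := a n) ?_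
      · rw [Real.norm_eq_abs] at this
        exact this
      · intro x hx
        rw [Set.mem_uIoc] at hx
        have hx0 : 0 ≤ x := by
          rcases hx with ⟨h1, _⟩ | ⟨h1, _⟩
          · linarith
          · linarith [ha0 n]
        have hxle : x ≤ c + 1 := by
          rcases hx with ⟨_, h2⟩ | ⟨_, h2⟩
          · linarith
          · linarith
        rw [Real.norm_eq_abs, abs_of_nonneg (le_trans zero_le_one (one_le_qProfile hx0))]
        exact qProfile_mono (Set.mem_Ici.2 hx0) (Set.mem_Ici.2 (by linarith)) hxle
    · have h1 : Tendsto (fun n => |a n - c|) atTop (nhds 0) := by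
        have := (ha.sub_const c).abs
        simpa using this
      have := h1.const_mul (qProfile (c+1))
      simpa using this
  have := hdiff.add_const (∫ x in (0:ℝ)..c, qProfile x)
  simpa using this

lemma sqrt_nat_tendsto : Tendsto (fun n : ℕ => Real.sqrt n) atTop atTop := by
  apply Filter.tendsto_atTop_atTop.2
  intro b
  refine ⟨⌈b⌉₊^2, fun n hn => ?_⟩
  have h1 : ((⌈b⌉₊:ℝ))^2 ≤ (n:ℝ) := by
    exact_mod_cast hn
  calc b ≤ (⌈b⌉₊ : ℝ) := Nat.le_ceil b
    _ = Real.sqrt (((⌈b⌉₊:ℝ))^2) := (Real.sqrt_sq (by positivity)).symm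
    _ ≤ Real.sqrt n := Real.sqrt_le_sqrt h1

end Aux

/-- In the critical regime `t(n)/√n → c > 0`, the cumulative LRU signal
energy satisfies `S_{n,t}/√n → ∫_0^c q(x) dx`. -/
theorem S_critical_regime (c : ℝ) (hc : 0 < c) (t : ℕ → ℕ)
    (ht : Tendsto (fun n => (t n : ℝ) / Real.sqrt n) atTop (nhds c)) :
    Tendsto (fun n => S n (t n) / Real.sqrt n) atTop
      (nhds (∫ x in (0 : ℝ)..c, qProfile x)) := by
  have hinv : Tendsto (fun n : ℕ => (Real.sqrt n)⁻¹) atTop (nhds 0) :=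
    tendsto_inv_atTop_zero.comp sqrt_nat_tendsto
  have hev1 : ∀ᶠ n : ℕ in atTop, 1 ≤ n := eventually_ge_atTop 1
  -- (t n + a)/√n → c  for a = 1, 2, 3
  have hshift : ∀ a : ℝ, Tendsto (fun n : ℕ => ((t n : ℝ) + a) / Real.sqrt n) atTop (nhds c) := by
    intro a
    have h2 : Tendsto (fun n : ℕ => (t n : ℝ)/Real.sqrt n + a * (Real.sqrt n)⁻¹)
        atTop (nhds (c + a * 0)) := ht.add (hinv.const_mul a)
    rw [mul_zero, add_zero] at h2
    apply h2.congr'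
    filter_upwards [hev1] with n hn
    have hs : (0:ℝ) < Real.sqrt n := Real.sqrt_pos.2 (by exact_mod_cast hn)
    field_simp
  -- (t n + 1)/n → 0
  have hsmall : Tendsto (fun n : ℕ => ((t n : ℝ) + 1) / n) atTop (nhds 0) := by
    have h2 : Tendsto (fun n : ℕ => (((t n : ℝ) + 1)/Real.sqrt n) * (Real.sqrt n)⁻¹)
        atTop (nhds (c * 0)) := (hshift 1).mul hinv
    rw [mul_zero] at h2
    apply h2.congr'
    filter_upwards [hev1] with n hn
    have hn' : (0:ℝ) < n := by exact_mod_cast hn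
    have hs : (0:ℝ) < Real.sqrt n := Real.sqrt_pos.2 hn'
    have hsq : Real.sqrt n * Real.sqrt n = (n:ℝ) := Real.mul_self_sqrt hn'.le
    rw [show ((n:ℕ):ℝ) = Real.sqrt n * Real.sqrt n from hsq.symm]
    field_simp
    rw [Real.sq_sqrt (sq_nonneg _)]
  -- the error term
  set B : ℝ := (c+1)^2/2 with hB
  set err : ℕ → ℝ := fun n => (((t n : ℝ) + 1)/Real.sqrt n) *
    (Real.exp B * (2 * (((t n : ℝ) + 1) / n))) with herrdef
  have herr : Tendsto err atTop (nhds 0) := by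
    have h1 : Tendsto (fun n : ℕ => Real.exp B * (2 * (((t n : ℝ) + 1) / n)))
        atTop (nhds (Real.exp B * (2 * 0))) :=
      Tendsto.const_mul _ (Tendsto.const_mul _ hsmall)
    have h2 := (hshift 1).mul h1
    rw [mul_zero, mul_zero, mul_zero] at h2
    exact h2
  have herr0 : ∀ᶠ n : ℕ in atTop, 0 ≤ err n := by
    filter_upwards [hev1] with n hn
    have hn' : (0:ℝ) < n := by exact_mod_cast hn
    have hs : (0:ℝ) ≤ Real.sqrt n := Real.sqrt_nonneg _
    have : (0:ℝ) ≤ ((t n : ℝ) + 1) := by positivity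
    apply mul_nonneg (div_nonneg this hs)
    positivity
  -- eventual smallness hypotheses
  have hev2 : ∀ᶠ n : ℕ in atTop, ((t n : ℝ) + 1) / n ≤ 1/2 :=
    hsmall.eventually_le_const (by norm_num : (0:ℝ) < 1/2)
  have hev3 : ∀ᶠ n : ℕ in atTop, ((t n : ℝ) + 2) / Real.sqrt n ≤ c + 1 :=
    (hshift 2).eventually_le_const (show c < c+1 by linarith)
  -- the central two-sided bound
  have hmain : ∀ᶠ n : ℕ in atTop,
      (∫ x in (0:ℝ)..((t n : ℝ)/Real.sqrt n), qProfile x) - err n ≤ S n (t n) / Real.sqrt n ∧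
      S n (t n) / Real.sqrt n ≤ (∫ x in (0:ℝ)..(((t n : ℝ)+3)/Real.sqrt n), qProfile x) + err n := by
    filter_upwards [hev1, hev2, hev3] with n hn h2 h3
    have hn' : (0:ℝ) < n := by exact_mod_cast hn
    have hs : (0:ℝ) < Real.sqrt n := Real.sqrt_pos.2 hn'
    have hsq : Real.sqrt n ^ 2 = (n:ℝ) := Real.sq_sqrt hn'.le
    -- per-term facts, for k ≤ t n
    have huB : ∀ k : ℕ, k ≤ t n → uu n k ≤ B := by
      intro k hk
      have hk' : (k:ℝ) ≤ (t n : ℝ) := by exact_mod_cast hk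
      have h4 : (t n : ℝ) + 2 ≤ (c+1) * Real.sqrt n := by
        rw [div_le_iff₀ hs] at h3; exact h3
      have h5 : ((t n : ℝ) + 2)^2 ≤ (c+1)^2 * n := by
        have hnn : (0:ℝ) ≤ (t n : ℝ) + 2 := by positivity
        nlinarith [Real.sq_sqrt hn'.le, Real.sqrt_nonneg (n:ℝ)]
      rw [uu, hB, div_le_div_iff₀ (by positivity) (by norm_num)]
      nlinarith
    have hQG : ∀ k : ℕ, k ≤ t n →
        |Q n k - Real.sinh (uu n k) / uu n k| ≤ Real.exp B * (2 * (((t n : ℝ) + 1)/n)) := by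
      intro k hk
      have hk' : (k:ℝ) ≤ (t n : ℝ) := by exact_mod_cast hk
      have hk2 : ((k:ℝ)+1)/n ≤ ((t n : ℝ)+1)/n := by gcongr
      have := Q_close n k hn (hk2.trans h2)
      refine this.trans ?_
      have he : Real.exp (uu n k) ≤ Real.exp B := Real.exp_le_exp.2 (huB k hk)
      have h6 : 2*((k:ℝ)+1)/n ≤ 2 * (((t n : ℝ)+1)/n) := by
        rw [mul_div_assoc]
        gcongr
      exact mul_le_mul he h6 (by positivity) (Real.exp_pos _).le
    -- sum comparison
    have hsumdiff : |S n (t n) - ∑ k ∈ Finset.range (t n + 1),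
        Real.sinh (uu n k) / uu n k| ≤
        ((t n : ℝ) + 1) * (Real.exp B * (2 * (((t n : ℝ) + 1)/n))) := by
      rw [S, ← Finset.sum_sub_distrib]
      refine (Finset.abs_sum_le_sum_abs _ _).trans ?_
      have := Finset.sum_le_card_nsmul (Finset.range (t n + 1))
        (fun k => |Q n k - Real.sinh (uu n k) / uu n k|)
        (Real.exp B * (2 * (((t n : ℝ) + 1)/n)))
        (fun k hk => hQG k (Nat.lt_succ_iff.1 (Finset.mem_range.1 hk)))
      simpa [Finset.card_range, nsmul_eq_mul] using this
    have hdiff2 : |S n (t n) / Real.sqrt n - (∑ k ∈ Finset.range (t n + 1),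
        Real.sinh (uu n k) / uu n k) / Real.sqrt n| ≤ err n := by
      have herr_eq : err n = ((t n : ℝ) + 1)/Real.sqrt n *
          (Real.exp B * (2 * (((t n : ℝ) + 1) / n))) := rfl
      rw [div_sub_div_same, abs_div, abs_of_pos hs, div_le_iff₀ hs, herr_eq]
      calc |S n (t n) - ∑ k ∈ Finset.range (t n + 1), Real.sinh (uu n k) / uu n k|
          ≤ ((t n : ℝ) + 1) * (Real.exp B * (2 * (((t n : ℝ) + 1)/n))) := hsumdiff
        _ = ((t n : ℝ) + 1)/Real.sqrt n * (Real.exp B * (2 * (((t n : ℝ) + 1)/n)))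
            * Real.sqrt n := by field_simp
    -- the Riemann sums sandwich
    have hql : ∀ k : ℕ, qProfile ((k:ℝ)/Real.sqrt n) ≤ Real.sinh (uu n k) / uu n k := by
      intro k
      apply q_le_ratio (by positivity) (uu_pos hn)
      rw [div_pow, hsq, uu]
      rw [div_le_div_iff₀ (by positivity) (by positivity)]
      have heq : (k:ℝ)^2/(n:ℝ) * (2*(n:ℝ)) = 2*(k:ℝ)^2 := by field_simp
      rw [heq]
      have : (0:ℝ) ≤ (k:ℝ) := by positivity
      nlinarith
    have hqu : ∀ k : ℕ, Real.sinh (uu n k) / uu n k ≤ qProfile (((k:ℝ)+2)/Real.sqrt n) := by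
      intro k
      apply ratio_le_q (by positivity) (uu_pos hn)
      rw [div_pow, hsq, uu]
      rw [div_le_div_iff₀ (by positivity) (by positivity)]
      have heq : ((k:ℝ)+2)^2/(n:ℝ) * (2*(n:ℝ)) = 2*((k:ℝ)+2)^2 := by field_simp
      rw [heq]
      have : (0:ℝ) ≤ (k:ℝ) := by positivity
      nlinarith
    have hlow : ∫ x in (0:ℝ)..((t n : ℝ)/Real.sqrt n), qProfile x
        ≤ (∑ k ∈ Finset.range (t n + 1), Real.sinh (uu n k) / uu n k) / Real.sqrt n := by
      refine (riemann_lower (t n) (Real.sqrt n) hs).trans ?_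
      gcongr with k hk
      exact hql k
    have hup : (∑ k ∈ Finset.range (t n + 1), Real.sinh (uu n k) / uu n k) / Real.sqrt n
        ≤ ∫ x in (0:ℝ)..(((t n : ℝ)+3)/Real.sqrt n), qProfile x := by
      refine le_trans ?_ (riemann_upper (t n) (Real.sqrt n) hs)
      gcongr with k hk
      exact hqu k
    have habs := abs_le.1 hdiff2
    constructor
    · linarith
    · linarith
  -- conclude by squeezing
  have hlowT : Tendsto (fun n => (∫ x in (0:ℝ)..((t n : ℝ)/Real.sqrt n), qProfile x) - err n)
      atTop (nhds (∫ x in (0:ℝ)..c, qProfile x)) := by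
    have h1 := int_tendsto c hc (fun n => (t n : ℝ)/Real.sqrt n)
      (fun n => by positivity) ht
    have := h1.sub herr
    simpa using this
  have hupT : Tendsto (fun n => (∫ x in (0:ℝ)..(((t n : ℝ)+3)/Real.sqrt n), qProfile x) + err n)
      atTop (nhds (∫ x in (0:ℝ)..c, qProfile x)) := by
    have h1 := int_tendsto c hc (fun n => ((t n : ℝ)+3)/Real.sqrt n)
      (fun n => by positivity) (hshift 3)
    have := h1.add herr
    simpa using this
  exact tendsto_of_tendsto_of_tendsto_of_le_of_le' hlowT hupT
    (hmain.mono (fun n h => h.1)) (hmain.mono (fun n h => h.2))
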